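/- Let A be a formally real integral domain which is an ℝ-algebra. Let I₀ be an imaginary unit, let f = f₀ + f₁·ι(I₀) with f₀, f₁ ∈ A, f₁ ≠ 0, and let h ∈ Quaternion A be not I₀-sliced. Then h * f * star h is I₀-sliced if and only if there exist an imaginary unit J₀ whose vector part is orthogonal to that of I₀ in ℝ³ and a nonzero I₀-sliced g ∈ Quaternion A such that h = ι(J₀) * g. (Theorem 5.4, case (ii).) -/

import Mathlib

open Quaternion

/-- The componentwise extension `ι : ℍ[ℝ] → ℍ[A]` of `algebraMap ℝ A`. -/
noncomputable def qmap {A : Type*} [CommRing A] [Algebra ℝ A] (q : Quaternion ℝ) :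
    Quaternion A :=
  ⟨algebraMap ℝ A q.re, algebraMap ℝ A q.imI, algebraMap ℝ A q.imJ, algebraMap ℝ A q.imK⟩

/-- An imaginary unit: a real quaternion with zero real part squaring to `-1`. -/
def IsImaginaryUnit (I : Quaternion ℝ) : Prop := I.re = 0 ∧ I ^ 2 = -1

/-- `q` is `I`-sliced if `q = a + b·ι(I)` for some `a, b ∈ A`. -/
noncomputable def IsSliced {A : Type*} [CommRing A] [Algebra ℝ A]
    (I : Quaternion ℝ) (q : Quaternion A) : Prop :=
  ∃ a b : A, q = (a : Quaternion A) + (b : Quaternion A) * qmap I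

/-- The vector parts of `I` and `M` are orthogonal in `ℝ³`. -/
def OrthIm (I M : Quaternion ℝ) : Prop :=
  I.imI * M.imI + I.imJ * M.imJ + I.imK * M.imK = 0

/-- `A` is formally real: a sum of four squares vanishes only trivially. -/
def FormallyRealFour (A : Type*) [CommRing A] : Prop :=
  ∀ a b c d : A, a ^ 2 + b ^ 2 + c ^ 2 + d ^ 2 = 0 → a = 0 ∧ b = 0 ∧ c = 0 ∧ d = 0

/-! ### Auxiliary lemmas -/

section Aux

variable {A : Type*} [CommRing A] [Algebra ℝ A]

@[simp] lemma qmap_re (q : Quaternion ℝ) : (qmap q : Quaternion A).re = algebraMap ℝ A q.re := rfl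
@[simp] lemma qmap_imI (q : Quaternion ℝ) : (qmap q : Quaternion A).imI = algebraMap ℝ A q.imI := rfl
@[simp] lemma qmap_imJ (q : Quaternion ℝ) : (qmap q : Quaternion A).imJ = algebraMap ℝ A q.imJ := rfl
@[simp] lemma qmap_imK (q : Quaternion ℝ) : (qmap q : Quaternion A).imK = algebraMap ℝ A q.imK := rfl

lemma qmap_mul (p q : Quaternion ℝ) : (qmap (p * q) : Quaternion A) = qmap p * qmap q := by
  ext <;> simp [Quaternion.re_mul, Quaternion.imI_mul, Quaternion.imJ_mul, Quaternion.imK_mul,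
    map_add, map_sub, map_mul]

lemma qmap_neg (p : Quaternion ℝ) : (qmap (-p) : Quaternion A) = -qmap p := by
  ext <;> simp

lemma qmap_neg_one : (qmap (-1) : Quaternion A) = -1 := by
  ext <;> simp

lemma half_addA {M : Type*} [AddCommGroup M] [Module ℝ M] {x y : M} (h : x + x = y + y) :
    x = y := by
  have h2 : ((2:ℝ))⁻¹ • ((2:ℝ) • x) = ((2:ℝ))⁻¹ • ((2:ℝ) • y) := by
    rw [two_smul, two_smul, h]
  simpa [smul_smul] using h2

lemma hnA {I₀ : Quaternion ℝ} (hn : I₀.imI^2 + I₀.imJ^2 + I₀.imK^2 = 1) :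
    (algebraMap ℝ A I₀.imI)^2 + (algebraMap ℝ A I₀.imJ)^2 + (algebraMap ℝ A I₀.imK)^2 = 1 := by
  have := congrArg (algebraMap ℝ A) hn
  simpa [map_add, map_pow] using this

lemma star_qmap_pure {X : Quaternion ℝ} (hx : X.re = 0) :
    star (qmap X : Quaternion A) = -qmap X := by
  ext <;> simp [hx]

/-- real quaternion facts -/
lemma pure_sq_neg_one {J : Quaternion ℝ} (hre : J.re = 0)
    (hn : J.imI^2 + J.imJ^2 + J.imK^2 = 1) : J * J = -1 := by
  ext <;> simp [Quaternion.re_mul, Quaternion.imI_mul, Quaternion.imJ_mul, Quaternion.imK_mul,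
      hre] <;> nlinarith [hn]

lemma norm_of_unit {J : Quaternion ℝ} (hre : J.re = 0) (hsq : J * J = -1) :
    J.imI^2 + J.imJ^2 + J.imK^2 = 1 := by
  have := congrArg QuaternionAlgebra.re hsq
  simp [Quaternion.re_mul, hre] at this
  nlinarith [this]

lemma anticomm_real {X Y : Quaternion ℝ} (hx : X.re = 0) (hy : Y.re = 0)
    (ho : OrthIm X Y) : X * Y = -(Y * X) := by
  have ho' : X.imI * Y.imI + X.imJ * Y.imJ + X.imK * Y.imK = 0 := ho
  ext <;> simp [Quaternion.re_mul, Quaternion.imI_mul, Quaternion.imJ_mul, Quaternion.imK_mul,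
    hx, hy] <;> linarith [ho']

lemma exists_orth {I : Quaternion ℝ} (hn : I.imI^2 + I.imJ^2 + I.imK^2 = 1) :
    ∃ J : Quaternion ℝ, J.re = 0 ∧ J.imI^2 + J.imJ^2 + J.imK^2 = 1 ∧ OrthIm I J := by
  by_cases hyz : I.imJ = 0 ∧ I.imK = 0
  · exact ⟨⟨0,0,1,0⟩, rfl, by norm_num, by simp [OrthIm, hyz.1]⟩
  · set y := I.imJ; set z := I.imK
    have hs : y^2 + z^2 ≠ 0 := by
      intro h0
      exact hyz ⟨by nlinarith [sq_nonneg y, sq_nonneg z], by nlinarith [sq_nonneg y, sq_nonneg z]⟩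
    have hspos : 0 < y^2 + z^2 := lt_of_le_of_ne (by positivity) (Ne.symm hs)
    set r := Real.sqrt (y^2 + z^2) with hr
    have hr2 : r^2 = y^2 + z^2 := Real.sq_sqrt hspos.le
    have hrne : r ≠ 0 := by positivity
    refine ⟨⟨0, 0, -z/r, y/r⟩, rfl, ?_, ?_⟩
    · field_simp
      ring_nf
      linarith [hr2]
    · show I.imI * 0 + y * (-z/r) + z * (y/r) = 0
      field_simp
      ring

lemma sliced_rep {I₀ : Quaternion ℝ} (hre : I₀.re = 0)
    (hn : I₀.imI^2 + I₀.imJ^2 + I₀.imK^2 = 1)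
    {q : Quaternion A} (hc : qmap I₀ * q = q * qmap I₀) :
    ∃ a b : A, q = (a : Quaternion A) + (b : Quaternion A) * qmap I₀ := by
  set x := algebraMap ℝ A I₀.imI with hx
  set y := algebraMap ℝ A I₀.imJ with hy
  set z := algebraMap ℝ A I₀.imK with hz
  have hn' : x^2 + y^2 + z^2 = 1 := hnA hn
  have h1 := congrArg QuaternionAlgebra.imI hc
  have h2 := congrArg QuaternionAlgebra.imJ hc
  have h3 := congrArg QuaternionAlgebra.imK hc
  simp only [Quaternion.imI_mul, Quaternion.imJ_mul, Quaternion.imK_mul, qmap_re, qmap_imI,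
    qmap_imJ, qmap_imK, hre, map_zero, zero_mul, mul_zero, add_zero, zero_add, zero_sub,
    sub_zero, ← hx, ← hy, ← hz] at h1 h2 h3
  have e1 : y * q.imK = z * q.imJ := half_addA (by linear_combination h1)
  have e2 : z * q.imI = x * q.imK := half_addA (by linear_combination h2)
  have e3 : x * q.imJ = y * q.imI := half_addA (by linear_combination h3)
  refine ⟨q.re, x * q.imI + y * q.imJ + z * q.imK, ?_⟩
  ext <;> simp only [Quaternion.re_add, Quaternion.imI_add, Quaternion.imJ_add,
    Quaternion.imK_add, Quaternion.re_coe, Quaternion.imI_coe, Quaternion.imJ_coe,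
    Quaternion.imK_coe, Quaternion.re_mul, Quaternion.imI_mul, Quaternion.imJ_mul,
    Quaternion.imK_mul, qmap_re, qmap_imI, qmap_imJ, qmap_imK, hre, map_zero, zero_mul,
    mul_zero, add_zero, zero_add, zero_sub, sub_zero, ← hx, ← hy, ← hz]
  · linear_combination (-q.imI) * hn' + (-y) * e3 + z * e2
  · linear_combination (-q.imJ) * hn' + x * e3 - z * e1
  · linear_combination (-q.imK) * hn' - x * e2 + y * e1

lemma Icomm (I : Quaternion A) (u v : A) :
    I * ((u : Quaternion A) + (v : Quaternion A) * I)
      = ((u : Quaternion A) + (v : Quaternion A) * I) * I := by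
  rw [mul_add, add_mul, ← mul_assoc, ← Quaternion.coe_commutes, ← Quaternion.coe_commutes]

lemma star_sliced {I₀ : Quaternion ℝ} (hre : I₀.re = 0) (u v : A) :
    star ((u : Quaternion A) + (v : Quaternion A) * qmap I₀)
      = (u : Quaternion A) + ((-v : A) : Quaternion A) * qmap I₀ := by
  ext <;> simp [Quaternion.re_mul, Quaternion.imI_mul, Quaternion.imJ_mul, Quaternion.imK_mul,
    hre] <;> ring

lemma slicedMul {I₀ : Quaternion ℝ} (hre : I₀.re = 0)
    (hn : I₀.imI^2 + I₀.imJ^2 + I₀.imK^2 = 1) (a b c d : A) :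
    ((a : Quaternion A) + (b : Quaternion A) * qmap I₀)
      * ((c : Quaternion A) + (d : Quaternion A) * qmap I₀)
      = ((a*c - b*d : A) : Quaternion A) + ((a*d + b*c : A) : Quaternion A) * qmap I₀ := by
  have hn' := hnA (A := A) hn
  ext <;> simp [Quaternion.re_mul, Quaternion.imI_mul, Quaternion.imJ_mul, Quaternion.imK_mul,
    hre]
  all_goals first
    | linear_combination (-(b*d)) * hn'
    | linear_combination (b*d) * hn'
    | ring

lemma slicedEqCoeff {I₀ : Quaternion ℝ} (hre : I₀.re = 0)
    (hn : I₀.imI^2 + I₀.imJ^2 + I₀.imK^2 = 1) {u v u' v' : A}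
    (h : (u : Quaternion A) + (v : Quaternion A) * qmap I₀
        = (u' : Quaternion A) + (v' : Quaternion A) * qmap I₀) :
    u = u' ∧ v = v' := by
  set x := algebraMap ℝ A I₀.imI with hx
  set y := algebraMap ℝ A I₀.imJ with hy
  set z := algebraMap ℝ A I₀.imK with hz
  have hn' : x^2 + y^2 + z^2 = 1 := hnA hn
  have h0 := congrArg QuaternionAlgebra.re h
  have h1 := congrArg QuaternionAlgebra.imI h
  have h2 := congrArg QuaternionAlgebra.imJ h
  have h3 := congrArg QuaternionAlgebra.imK h
  simp only [Quaternion.re_add, Quaternion.imI_add, Quaternion.imJ_add, Quaternion.imK_add,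
    Quaternion.re_coe, Quaternion.imI_coe, Quaternion.imJ_coe, Quaternion.imK_coe,
    Quaternion.re_mul, Quaternion.imI_mul, Quaternion.imJ_mul, Quaternion.imK_mul,
    qmap_re, qmap_imI, qmap_imJ, qmap_imK, hre, map_zero, zero_mul, mul_zero, add_zero,
    zero_add, zero_sub, sub_zero, ← hx, ← hy, ← hz] at h0 h1 h2 h3
  refine ⟨h0, ?_⟩
  linear_combination (v' - v) * hn' + x * h1 + y * h2 + z * h3

lemma Jmove {I₀ J₀ : Quaternion ℝ} (hre : I₀.re = 0) (hJre : J₀.re = 0)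
    (ho : OrthIm I₀ J₀) (u v : A) :
    qmap J₀ * ((u : Quaternion A) + (v : Quaternion A) * qmap I₀)
      = ((u : Quaternion A) + ((-v : A) : Quaternion A) * qmap I₀) * qmap J₀ := by
  have ho0 : I₀.imI * J₀.imI + I₀.imJ * J₀.imJ + I₀.imK * J₀.imK = 0 := ho
  have ho' : (algebraMap ℝ A I₀.imI) * (algebraMap ℝ A J₀.imI)
      + (algebraMap ℝ A I₀.imJ) * (algebraMap ℝ A J₀.imJ)
      + (algebraMap ℝ A I₀.imK) * (algebraMap ℝ A J₀.imK) = 0 := by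
    have := congrArg (algebraMap ℝ A) ho0
    simpa [map_add, map_mul] using this
  ext <;> simp [Quaternion.re_mul, Quaternion.imI_mul, Quaternion.imJ_mul, Quaternion.imK_mul,
    hre, hJre]
  all_goals first
    | linear_combination (-(2*v)) * ho'
    | linear_combination (2*v) * ho'
    | ring

section signs
variable {B : Type*} [Ring B] {I p q r : B}

lemma sign_ccc (h1 : I*p = p*I) (h2 : I*q = q*I) (h3 : I*r = r*I) :
    I*(p*q*r) = (p*q*r)*I := by
  rw [← mul_assoc, ← mul_assoc, h1, mul_assoc p I q, h2, ← mul_assoc,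
    mul_assoc (p*q) I r, h3, ← mul_assoc]

lemma sign_cca (h1 : I*p = p*I) (h2 : I*q = q*I) (h3 : I*r = -(r*I)) :
    I*(p*q*r) = -((p*q*r)*I) := by
  rw [← mul_assoc, ← mul_assoc, h1, mul_assoc p I q, h2, ← mul_assoc,
    mul_assoc (p*q) I r, h3, mul_neg, ← mul_assoc]

lemma sign_acc (h1 : I*p = -(p*I)) (h2 : I*q = q*I) (h3 : I*r = r*I) :
    I*(p*q*r) = -((p*q*r)*I) := by
  rw [← mul_assoc, ← mul_assoc, h1, neg_mul, neg_mul, mul_assoc p I q, h2, ← mul_assoc,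
    mul_assoc (p*q) I r, h3, ← mul_assoc]

lemma sign_aca (h1 : I*p = -(p*I)) (h2 : I*q = q*I) (h3 : I*r = -(r*I)) :
    I*(p*q*r) = (p*q*r)*I := by
  rw [← mul_assoc, ← mul_assoc, h1, neg_mul, neg_mul, mul_assoc p I q, h2, ← mul_assoc,
    mul_assoc (p*q) I r, h3, mul_neg, neg_neg, ← mul_assoc]

end signs

end Aux

theorem conjugation_sliced_iff_case_same_slice
    {A : Type*} [CommRing A] [IsDomain A] [Algebra ℝ A] (hFR : FormallyRealFour A)
    (I₀ : Quaternion ℝ) (hI₀ : IsImaginaryUnit I₀)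
    (f₀ f₁ : A) (hf₁ : f₁ ≠ 0) (f : Quaternion A)
    (hf : f = (f₀ : Quaternion A) + (f₁ : Quaternion A) * qmap I₀)
    (h : Quaternion A) (hh : ¬ IsSliced I₀ h) :
    IsSliced I₀ (h * f * star h) ↔
      ∃ J₀ : Quaternion ℝ, IsImaginaryUnit J₀ ∧ OrthIm I₀ J₀ ∧
        ∃ g : Quaternion A, IsSliced I₀ g ∧ g ≠ 0 ∧ h = qmap J₀ * g := by
  obtain ⟨hre, hsq⟩ := hI₀
  have hsq' : I₀ * I₀ = -1 := by rw [← sq]; exact hsq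
  have hn : I₀.imI^2 + I₀.imJ^2 + I₀.imK^2 = 1 := norm_of_unit hre hsq'
  have hI2 : (qmap I₀ : Quaternion A) * qmap I₀ = -1 := by
    rw [← qmap_mul, hsq', qmap_neg_one]
  have hstarI : star (qmap I₀ : Quaternion A) = -qmap I₀ := star_qmap_pure hre
  have cIf : qmap I₀ * f = f * qmap I₀ := by rw [hf]; exact Icomm _ f₀ f₁
  -- general (anti)commutation of the two projections
  have genP : ∀ u : Quaternion A,
      qmap I₀ * (u - qmap I₀*u*qmap I₀) = (u - qmap I₀*u*qmap I₀) * qmap I₀ := by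
    intro u
    have l1 : qmap I₀ * (u - qmap I₀*u*qmap I₀) = qmap I₀*u + u*qmap I₀ := by
      rw [mul_sub, mul_assoc (qmap I₀) u (qmap I₀), ← mul_assoc (qmap I₀) (qmap I₀) (u*qmap I₀),
        hI2, neg_one_mul, sub_neg_eq_add]
    have l2 : (u - qmap I₀*u*qmap I₀) * qmap I₀ = u*qmap I₀ + qmap I₀*u := by
      rw [sub_mul, mul_assoc (qmap I₀*u) (qmap I₀) (qmap I₀), hI2, mul_neg_one, sub_neg_eq_add]
    rw [l1, l2, add_comm]
  have genR : ∀ u : Quaternion A,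
      qmap I₀ * (u + qmap I₀*u*qmap I₀) = -((u + qmap I₀*u*qmap I₀) * qmap I₀) := by
    intro u
    have l1 : qmap I₀ * (u + qmap I₀*u*qmap I₀) = qmap I₀*u - u*qmap I₀ := by
      rw [mul_add, mul_assoc (qmap I₀) u (qmap I₀), ← mul_assoc (qmap I₀) (qmap I₀) (u*qmap I₀),
        hI2, neg_one_mul, ← sub_eq_add_neg]
    have l2 : (u + qmap I₀*u*qmap I₀) * qmap I₀ = u*qmap I₀ - qmap I₀*u := by
      rw [add_mul, mul_assoc (qmap I₀*u) (qmap I₀) (qmap I₀), hI2, mul_neg_one, ← sub_eq_add_neg]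
    rw [l1, l2, neg_sub]
  constructor
  · -- forward direction
    intro hS
    obtain ⟨J₀, hJre, hJn, hJo⟩ := exists_orth hn
    have hJsq' : J₀ * J₀ = -1 := pure_sq_neg_one hJre hJn
    have hJ2 : (qmap J₀ : Quaternion A) * qmap J₀ = -1 := by
      rw [← qmap_mul, hJsq', qmap_neg_one]
    have hIJ : (qmap I₀ : Quaternion A) * qmap J₀ = -(qmap J₀ * qmap I₀) := by
      rw [← qmap_mul, ← qmap_mul, ← qmap_neg, anticomm_real hre hJre hJo]
    have hstarJ : star (qmap J₀ : Quaternion A) = -qmap J₀ := star_qmap_pure hJre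
    obtain ⟨s1, s2, hSrep⟩ := hS
    have hC : qmap I₀ * (h * f * star h) = (h * f * star h) * qmap I₀ := by
      rw [hSrep]; exact Icomm _ s1 s2
    set P : Quaternion A := h - qmap I₀*h*qmap I₀ with hPdef
    set R : Quaternion A := h + qmap I₀*h*qmap I₀ with hRdef
    have hIP : qmap I₀ * P = P * qmap I₀ := genP h
    have hIR : qmap I₀ * R = -(R * qmap I₀) := genR h
    have hstarP : star P = star h - qmap I₀ * star h * qmap I₀ := by
      rw [hPdef, star_sub, star_mul, star_mul, hstarI]
      simp only [mul_neg, neg_mul, neg_neg, mul_assoc]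
    have hstarR : star R = star h + qmap I₀ * star h * qmap I₀ := by
      rw [hRdef, star_add, star_mul, star_mul, hstarI]
      simp only [mul_neg, neg_mul, neg_neg, mul_assoc]
    have hIsP : qmap I₀ * star P = star P * qmap I₀ := by rw [hstarP]; exact genP (star h)
    have hIsR : qmap I₀ * star R = -(star R * qmap I₀) := by rw [hstarR]; exact genR (star h)
    have hsum : P + R = h + h := by rw [hPdef, hRdef]; abel
    have hssum : star P + star R = star h + star h := by rw [← star_add, hsum, star_add]
    have hexp : (P+R)*f*(star P + star R)
        = P*f*star P + P*f*star R + (R*f*star P + R*f*star R) := by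
      rw [add_mul, add_mul, mul_add, mul_add]
    have hT4 : ((h+h))*f*(star h + star h)
        = h*f*star h + h*f*star h + (h*f*star h + h*f*star h) := by
      rw [add_mul, add_mul, mul_add]
    have hCT : qmap I₀ * ((P+R)*f*(star P + star R))
        = ((P+R)*f*(star P + star R)) * qmap I₀ := by
      rw [hsum, hssum, hT4]
      simp only [mul_add, add_mul, hC]
    rw [hexp] at hCT
    simp only [mul_add, add_mul] at hCT
    rw [sign_ccc hIP cIf hIsP, sign_cca hIP cIf hIsR, sign_acc hIR cIf hIsP,
      sign_aca hIR cIf hIsR] at hCT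
    have key : (P*f*star R)*qmap I₀ + (R*f*star P)*qmap I₀
        + ((P*f*star R)*qmap I₀ + (R*f*star P)*qmap I₀) = 0 := by
      linear_combination (norm := abel) -hCT
    have k3 : (P*f*star R)*qmap I₀ + (R*f*star P)*qmap I₀ = 0 :=
      half_addA (y := 0) (by simpa using key)
    have k4 : P*f*star R + R*f*star P = 0 := by
      have h5 : (P*f*star R + R*f*star P) * (qmap I₀ * qmap I₀) = 0 := by
        rw [← mul_assoc, add_mul, k3, zero_mul]
      rw [hI2, mul_neg_one, neg_eq_zero] at h5
      exact h5
    obtain ⟨a, b, hPab⟩ := sliced_rep hre hn hIP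
    set Q : Quaternion A := -(R * qmap J₀) with hQdef
    have hQJ : Q * qmap J₀ = R := by
      rw [hQdef, neg_mul, mul_assoc, hJ2, mul_neg_one, neg_neg]
    have hIQ : qmap I₀ * Q = Q * qmap I₀ := by
      rw [hQdef, mul_neg, neg_mul, neg_inj, ← mul_assoc, hIR, neg_mul, mul_assoc, hIJ,
        mul_neg, neg_neg, ← mul_assoc]
    obtain ⟨c, d, hQcd⟩ := sliced_rep hre hn hIQ
    have hstarR' : star R = -(Q * qmap J₀) := by
      rw [← hQJ, hQcd, star_mul, hstarJ, star_sliced hre, neg_mul,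
        Jmove hre hJre hJo c (-d), neg_neg]
    have hstarP' : star P = (a : Quaternion A) + ((-b : A) : Quaternion A) * qmap I₀ := by
      rw [hPab]; exact star_sliced hre a b
    rw [hstarR', hstarP', ← hQJ, hf] at k4
    have T2 : (P*((f₀ : Quaternion A) + (f₁ : Quaternion A) * qmap I₀))*(-(Q*qmap J₀))
        = -(((P*((f₀ : Quaternion A) + (f₁ : Quaternion A) * qmap I₀))*Q)*qmap J₀) := by
      rw [mul_neg, ← mul_assoc]
    have T3 : ((Q*qmap J₀)*((f₀ : Quaternion A) + (f₁ : Quaternion A) * qmap I₀))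
          *((a : Quaternion A) + ((-b : A) : Quaternion A) * qmap I₀)
        = ((Q*((f₀ : Quaternion A) + ((-f₁ : A) : Quaternion A) * qmap I₀))
          *((a : Quaternion A) + (b : Quaternion A) * qmap I₀))*qmap J₀ := by
      rw [mul_assoc Q (qmap J₀) _, Jmove hre hJre hJo f₀ f₁, ← mul_assoc Q _ (qmap J₀),
        mul_assoc _ (qmap J₀) _, Jmove hre hJre hJo a (-b), neg_neg, ← mul_assoc]
    rw [T2, T3] at k4
    have k5 : ((Q*((f₀ : Quaternion A) + ((-f₁ : A) : Quaternion A) * qmap I₀))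
          *((a : Quaternion A) + (b : Quaternion A) * qmap I₀)
        - (P*((f₀ : Quaternion A) + (f₁ : Quaternion A) * qmap I₀))*Q) * qmap J₀ = 0 := by
      rw [sub_mul, sub_eq_add_neg, add_comm]
      exact k4
    have k6 : (Q*((f₀ : Quaternion A) + ((-f₁ : A) : Quaternion A) * qmap I₀))
          *((a : Quaternion A) + (b : Quaternion A) * qmap I₀)
        = (P*((f₀ : Quaternion A) + (f₁ : Quaternion A) * qmap I₀))*Q := by
      rw [← sub_eq_zero]
      have h5 : ((Q*((f₀ : Quaternion A) + ((-f₁ : A) : Quaternion A) * qmap I₀))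
          *((a : Quaternion A) + (b : Quaternion A) * qmap I₀)
        - (P*((f₀ : Quaternion A) + (f₁ : Quaternion A) * qmap I₀))*Q)
          * (qmap J₀ * qmap J₀) = 0 := by
        rw [← mul_assoc, k5, zero_mul]
      rw [hJ2, mul_neg_one, neg_eq_zero] at h5
      exact h5
    rw [hPab, hQcd, slicedMul hre hn c d f₀ (-f₁), slicedMul hre hn a b f₀ f₁,
      slicedMul hre hn _ _ a b, slicedMul hre hn _ _ c d] at k6
    obtain ⟨eu, ev⟩ := slicedEqCoeff hre hn k6
    have E1 : f₁*(a*d + b*c) = 0 :=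
      half_addA (y := 0) (by simpa using (by linear_combination eu :
        f₁*(a*d + b*c) + f₁*(a*d + b*c) = 0))
    have E2 : f₁*(a*c - b*d) = 0 :=
      half_addA (y := 0) (by simpa using (by linear_combination -ev :
        f₁*(a*c - b*d) + f₁*(a*c - b*d) = 0))
    have Ead : a*d + b*c = 0 := by
      rcases mul_eq_zero.mp E1 with h1 | h1
      · exact absurd h1 hf₁
      · exact h1
    have Eac : a*c - b*d = 0 := by
      rcases mul_eq_zero.mp E2 with h1 | h1
      · exact absurd h1 hf₁
      · exact h1
    have hprod : (a^2+b^2)*(c^2+d^2) = 0 := by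
      linear_combination (a*c - b*d)*Eac + (a*d + b*c)*Ead
    have hcd : ¬(c = 0 ∧ d = 0) := by
      rintro ⟨rfl, rfl⟩
      have hQ0 : Q = 0 := by rw [hQcd]; simp
      have hR0 : R = 0 := by rw [← hQJ, hQ0, zero_mul]
      have h2 : h + qmap I₀*h*qmap I₀ = 0 := by rw [← hRdef]; exact hR0
      have hIhI' : qmap I₀*h*qmap I₀ = -h := by rw [← zero_sub, ← h2]; abel
      have hPsum : P = h + h := by rw [hPdef, hIhI', sub_neg_eq_add]
      have hcomm2 : qmap I₀ * (h+h) = (h+h) * qmap I₀ := by rw [← hPsum]; exact hIP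
      have hIh : qmap I₀ * h = h * qmap I₀ :=
        half_addA (by simpa [mul_add, add_mul] using hcomm2)
      exact hh (sliced_rep hre hn hIh)
    have hcd2 : c^2 + d^2 ≠ 0 := by
      intro h0
      have := hFR c d 0 0 (by linear_combination h0)
      exact hcd ⟨this.1, this.2.1⟩
    have hab : a^2 + b^2 = 0 := by
      rcases mul_eq_zero.mp hprod with h1 | h1
      · exact h1
      · exact absurd h1 hcd2
    obtain ⟨ha, hb, -, -⟩ := hFR a b 0 0 (by linear_combination hab)
    have hP0 : P = 0 := by rw [hPab, ha, hb]; simp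
    have hIhI : qmap I₀*h*qmap I₀ = h := by
      rw [hPdef] at hP0
      exact (sub_eq_zero.mp hP0).symm
    have hA : qmap I₀*h = -(h*qmap I₀) := by
      have l : (qmap I₀*h)*(qmap I₀*qmap I₀) = h*qmap I₀ := by rw [← mul_assoc, hIhI]
      rw [hI2, mul_neg_one] at l
      exact neg_eq_iff_eq_neg.mp l
    refine ⟨J₀, ⟨hJre, by rw [sq]; exact hJsq'⟩, hJo, -(qmap J₀*h), ?_, ?_, ?_⟩
    · -- sliced
      have hIg : qmap I₀*(-(qmap J₀*h)) = (-(qmap J₀*h))*qmap I₀ := by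
        rw [mul_neg, neg_mul, neg_inj, ← mul_assoc, hIJ, neg_mul, mul_assoc, hA,
          mul_neg, neg_neg, ← mul_assoc]
      exact sliced_rep hre hn hIg
    · -- nonzero
      intro hg0
      have hJh : qmap J₀ * h = 0 := neg_eq_zero.mp hg0
      have hh0 : h = 0 := by
        have l : qmap J₀*(qmap J₀*h) = 0 := by rw [hJh, mul_zero]
        rw [← mul_assoc, hJ2, neg_one_mul, neg_eq_zero] at l
        exact l
      exact hh ⟨0, 0, by simp [hh0]⟩
    · have l : qmap J₀ * -(qmap J₀*h) = h := by
        rw [mul_neg, ← mul_assoc, hJ2, neg_one_mul, neg_neg]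
      exact l.symm
  · -- backward direction
    rintro ⟨J₀', ⟨hJre', hJsq'⟩, hJo', g, hg, hgne, hhg⟩
    obtain ⟨α, β, hgab⟩ := hg
    have hIJ' : (qmap I₀ : Quaternion A) * qmap J₀' = -(qmap J₀' * qmap I₀) := by
      rw [← qmap_mul, ← qmap_mul, ← qmap_neg, anticomm_real hre hJre' hJo']
    have hstarJ' : star (qmap J₀' : Quaternion A) = -qmap J₀' := star_qmap_pure hJre'
    have hIg : qmap I₀*g = g*qmap I₀ := by rw [hgab]; exact Icomm _ α β
    have hIsg : qmap I₀*star g = star g*qmap I₀ := by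
      rw [hgab, star_sliced hre]; exact Icomm _ α (-β)
    have hIw : qmap I₀*(g*f*star g) = (g*f*star g)*qmap I₀ := sign_ccc hIg cIf hIsg
    have hC : qmap I₀*(h*f*star h) = (h*f*star h)*qmap I₀ := by
      rw [hhg]
      have hsh : star (qmap J₀'*g) = -(star g * qmap J₀') := by
        rw [star_mul, hstarJ', mul_neg]
      rw [hsh]
      have collapse : (qmap J₀'*g)*f*(-(star g*qmap J₀'))
          = -(((qmap J₀'*(g*f*star g)))*qmap J₀') := by
        rw [mul_neg, mul_assoc (qmap J₀') g f, ← mul_assoc (qmap J₀'*(g*f)) (star g) (qmap J₀'),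
          mul_assoc (qmap J₀') (g*f) (star g)]
      rw [collapse, mul_neg, neg_mul, neg_inj]
      exact sign_aca hIJ' hIw hIJ'
    exact sliced_rep hre hn hC
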